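/- Let (𝔼_{s,t}) be a family of operators 𝔼_{s,t}: L²(ℱ_t) → L²(ℱ_s) satisfying (A4): 1_A·𝔼_{s,t}[X] = 1_A·𝔼_{s,t}[1_A·X] a.s. for all A ∈ ℱ_s, and the normalization (A4₀): 𝔼_{s,t}[0] = 0 a.s. Then the family satisfies (A4'): 1_A·𝔼_{s,t}[X] = 𝔼_{s,t}[1_A·X] a.s. for all A ∈ ℱ_s. Conversely, (A4') implies both (A4) and (A4₀). -/

import Mathlib

open MeasureTheory Set

/-- (A4) together with the normalization (A4₀) is equivalent to (A4'). -/
theorem stmt0 {Ω : Type*} {mΩ : MeasurableSpace Ω} (P : Measure Ω) [IsProbabilityMeasure P]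
    (ℱ : Filtration ℝ mΩ)
    (E : ℝ → ℝ → (Ω → ℝ) → Ω → ℝ) :
    ((∀ s t : ℝ, 0 ≤ s → s ≤ t → ∀ X : Ω → ℝ, MemLp X 2 P → StronglyMeasurable[ℱ t] X →
        ∀ A : Set Ω, MeasurableSet[ℱ s] A →
          A.indicator (E s t X) =ᵐ[P] A.indicator (E s t (A.indicator X))) ∧
      (∀ s t : ℝ, 0 ≤ s → s ≤ t →
        E s t (fun _ => (0 : ℝ)) =ᵐ[P] fun _ => (0 : ℝ)))
    ↔ (∀ s t : ℝ, 0 ≤ s → s ≤ t → ∀ X : Ω → ℝ, MemLp X 2 P → StronglyMeasurable[ℱ t] X →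
        ∀ A : Set Ω, MeasurableSet[ℱ s] A →
          A.indicator (E s t X) =ᵐ[P] E s t (A.indicator X)) := by
  constructor
  · rintro ⟨h4, h0⟩ s t hs hst X hX hXm A hA
    have hAt : MeasurableSet[ℱ t] A := ℱ.mono hst _ hA
    have hAm : MeasurableSet A := ℱ.le t _ hAt
    have hXA : MemLp (A.indicator X) 2 P := hX.indicator hAm
    have hXAm : StronglyMeasurable[ℱ t] (A.indicator X) := hXm.indicator hAt
    have h1 := h4 s t hs hst X hX hXm A hA
    have h2 := h4 s t hs hst (A.indicator X) hXA hXAm Aᶜ hA.compl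
    have hzero : Aᶜ.indicator (A.indicator X) = fun _ => (0 : ℝ) := by
      funext ω
      simp [Set.indicator_indicator]
    rw [hzero] at h2
    have h3 := h0 s t hs hst
    filter_upwards [h1, h2, h3] with ω hω1 hω2 hω3
    by_cases hωA : ω ∈ A
    · have := hω1
      simp only [Set.indicator_of_mem hωA] at this ⊢
      exact this
    · have hωc : ω ∈ Aᶜ := hωA
      have : Aᶜ.indicator (E s t (A.indicator X)) ω =
          Aᶜ.indicator (E s t fun _ => (0:ℝ)) ω := hω2
      simp only [Set.indicator_of_mem hωc] at this
      simp only [Set.indicator_of_notMem hωA]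
      rw [this, hω3]
  · intro h4'
    constructor
    · intro s t hs hst X hX hXm A hA
      have hAt : MeasurableSet[ℱ t] A := ℱ.mono hst _ hA
      have hAm : MeasurableSet A := ℱ.le t _ hAt
      have h1 := h4' s t hs hst X hX hXm A hA
      have h2 := h4' s t hs hst (A.indicator X) (hX.indicator hAm)
        (hXm.indicator hAt) A hA
      have hAA : A.indicator (A.indicator X) = A.indicator X := by
        funext ω; simp [Set.indicator_indicator]
      rw [hAA] at h2
      filter_upwards [h1, h2] with ω hω1 hω2
      rw [hω1, ← hω2]
    · intro s t hs hst
      have h := h4' s t hs hst (fun _ => (0:ℝ)) (memLp_const 0)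
        stronglyMeasurable_const ∅ (@MeasurableSet.empty _ (ℱ s))
      have he : (∅ : Set Ω).indicator (fun _ : Ω => (0:ℝ)) = fun _ => (0:ℝ) := by
        funext ω; simp
      rw [he] at h
      filter_upwards [h] with ω hω
      rw [← hω]
      simp
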